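/- For every n ≥ 2 and every choice of normalized two-qubit states ψ₁,…,ψ_{n−1}, the Hamiltonian H_n(ψ₁,…,ψ_{n−1}) is frustration-free: its smallest eigenvalue is zero, and the dimension of its kernel 𝒢_n is at least n+1. -/

import Mathlib

open scoped BigOperators
open Matrix Polynomial

noncomputable section

/-- A two-site operator `A` applied to qubits `i` and `j` of an `n`-qubit chain,
acting as the identity on the remaining qubits. -/
def twoSite (n : ℕ) (A : Matrix (Fin 2 × Fin 2) (Fin 2 × Fin 2) ℂ) (i j : Fin n) :
    Matrix (Fin n → Fin 2) (Fin n → Fin 2) ℂ :=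
  fun x y => A (x i, x j) (y i, y j) *
    ∏ k : Fin n, if k = i ∨ k = j then 1 else (if x k = y k then 1 else 0)

/-- The rank-one projector `|ψ⟩⟨ψ|` onto a two-qubit state `ψ`. -/
def vecProj (ψ : Fin 2 × Fin 2 → ℂ) : Matrix (Fin 2 × Fin 2) (Fin 2 × Fin 2) ℂ :=
  fun a b => ψ a * star (ψ b)

/-- Open-boundary chain Hamiltonian with (possibly) site-dependent forbidden states:
`H_n(ψ₁,…,ψ_{n-1}) = Σ_j |ψ_j⟩⟨ψ_j|_{j,j+1}` (here `ψs` is 0-indexed). -/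
def HnGen (n : ℕ) (ψs : ℕ → Fin 2 × Fin 2 → ℂ) :
    Matrix (Fin n → Fin 2) (Fin n → Fin 2) ℂ :=
  ∑ i : Fin n,
    if h : (i : ℕ) + 1 < n then twoSite n (vecProj (ψs (i : ℕ))) i ⟨(i : ℕ) + 1, h⟩ else 0

/-- Translation-invariant open-boundary Hamiltonian `H_n(ψ)`. -/
def Hn (n : ℕ) (ψ : Fin 2 × Fin 2 → ℂ) : Matrix (Fin n → Fin 2) (Fin n → Fin 2) ℂ :=
  HnGen n fun _ => ψ

namespace FFaux

abbrev V (N : ℕ) := (Fin N → Fin 2) → ℂ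

/-- update two coordinates -/
def U2 {N : ℕ} (x : Fin N → Fin 2) (i j : Fin N) (a b : Fin 2) : Fin N → Fin 2 :=
  Function.update (Function.update x i a) j b

lemma U2_apply_i {N} (x : Fin N → Fin 2) {i j : Fin N} (hij : i ≠ j) (a b : Fin 2) :
    U2 x i j a b i = a := by
  simp [U2, Function.update_of_ne hij]

lemma U2_apply_j {N} (x : Fin N → Fin 2) (i j : Fin N) (a b : Fin 2) :
    U2 x i j a b j = b := by simp [U2]

lemma U2_apply_other {N} (x : Fin N → Fin 2) {i j k : Fin N} (hki : k ≠ i) (hkj : k ≠ j)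
    (a b : Fin 2) : U2 x i j a b k = x k := by
  simp [U2, Function.update_of_ne hkj, Function.update_of_ne hki]

lemma U2_U2 {N} (x : Fin N → Fin 2) {i j : Fin N} (hij : i ≠ j) (a b a' b' : Fin 2) :
    U2 (U2 x i j a b) i j a' b' = U2 x i j a' b' := by
  funext k
  rcases eq_or_ne k j with rfl | hkj
  · simp [U2_apply_j]
  rcases eq_or_ne k i with rfl | hki
  · rw [U2_apply_i _ hij, U2_apply_i _ hij]
  · rw [U2_apply_other _ hki hkj, U2_apply_other _ hki hkj, U2_apply_other _ hki hkj]

lemma U2_self {N} (x : Fin N → Fin 2) {i j : Fin N} (hij : i ≠ j) :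
    U2 x i j (x i) (x j) = x := by
  funext k
  rcases eq_or_ne k j with rfl | hkj
  · simp [U2_apply_j]
  rcases eq_or_ne k i with rfl | hki
  · rw [U2_apply_i _ hij]
  · rw [U2_apply_other _ hki hkj]

/-- key reindexing: sum against the delta-product -/
lemma sum_delta_prod {N : ℕ} (x : Fin N → Fin 2) {i j : Fin N} (hij : i ≠ j)
    (Φ : (Fin N → Fin 2) → ℂ) :
    ∑ y : Fin N → Fin 2,
      (∏ k : Fin N, if k = i ∨ k = j then 1 else (if x k = y k then (1:ℂ) else 0)) * Φ y
      = ∑ a : Fin 2, ∑ b : Fin 2, Φ (U2 x i j a b) := by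
  classical
  have hinj : Set.InjOn (fun p : Fin 2 × Fin 2 => U2 x i j p.1 p.2) ↑(Finset.univ : Finset (Fin 2 × Fin 2)) := by
    intro p hp q hq hpq
    have hpq' : U2 x i j p.1 p.2 = U2 x i j q.1 q.2 := hpq
    have h1 : U2 x i j p.1 p.2 i = U2 x i j q.1 q.2 i := by rw [hpq']
    have h2 : U2 x i j p.1 p.2 j = U2 x i j q.1 q.2 j := by rw [hpq']
    rw [U2_apply_i _ hij, U2_apply_i _ hij] at h1
    rw [U2_apply_j, U2_apply_j] at h2
    exact Prod.ext h1 h2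
  have himage : ∀ y : Fin N → Fin 2,
      y ∉ Finset.image (fun p : Fin 2 × Fin 2 => U2 x i j p.1 p.2) Finset.univ →
      (∏ k : Fin N, if k = i ∨ k = j then 1 else (if x k = y k then (1:ℂ) else 0)) * Φ y = 0 := by
    intro y hy
    have : ¬ (∀ k, k ≠ i → k ≠ j → y k = x k) := by
      intro hall
      apply hy
      refine Finset.mem_image.2 ⟨(y i, y j), Finset.mem_univ _, ?_⟩
      funext k
      rcases eq_or_ne k j with rfl | hkj
      · rw [U2_apply_j]
      rcases eq_or_ne k i with rfl | hki
      · rw [U2_apply_i _ hij]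
      · rw [U2_apply_other _ hki hkj, hall k hki hkj]
    push_neg at this
    obtain ⟨k, hki, hkj, hk⟩ := this
    have : (∏ k : Fin N, if k = i ∨ k = j then 1 else (if x k = y k then (1:ℂ) else 0)) = 0 := by
      apply Finset.prod_eq_zero (Finset.mem_univ k)
      have : ¬ (k = i ∨ k = j) := by tauto
      rw [if_neg this, if_neg (by exact fun h => hk h.symm)]
    rw [this, zero_mul]
  calc ∑ y : Fin N → Fin 2,
      (∏ k : Fin N, if k = i ∨ k = j then 1 else (if x k = y k then (1:ℂ) else 0)) * Φ y
      = ∑ y ∈ Finset.image (fun p : Fin 2 × Fin 2 => U2 x i j p.1 p.2) Finset.univ,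
        (∏ k : Fin N, if k = i ∨ k = j then 1 else (if x k = y k then (1:ℂ) else 0)) * Φ y := by
        refine (Finset.sum_subset (Finset.subset_univ _) ?_).symm
        intro y _ hy; exact himage y hy
    _ = ∑ p : Fin 2 × Fin 2,
        (∏ k : Fin N, if k = i ∨ k = j then 1 else (if x k = (U2 x i j p.1 p.2) k then (1:ℂ) else 0)) * Φ (U2 x i j p.1 p.2) := by
        rw [Finset.sum_image (fun p hp q hq h => hinj hp hq h)]
    _ = ∑ p : Fin 2 × Fin 2, Φ (U2 x i j p.1 p.2) := by
        apply Finset.sum_congr rfl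
        intro p _
        have : (∏ k : Fin N, if k = i ∨ k = j then 1 else (if x k = (U2 x i j p.1 p.2) k then (1:ℂ) else 0)) = 1 := by
          apply Finset.prod_eq_one
          intro k _
          by_cases hk : k = i ∨ k = j
          · rw [if_pos hk]
          · push_neg at hk
            rw [if_neg (by tauto), U2_apply_other _ hk.1 hk.2, if_pos rfl]
        rw [this, one_mul]
    _ = ∑ a : Fin 2, ∑ b : Fin 2, Φ (U2 x i j a b) := by rw [Fintype.sum_prod_type]

/-- the contraction of `v` with `ψ` on sites `i j` -/
def ctrv {N : ℕ} (ψ : Fin 2 × Fin 2 → ℂ) (i j : Fin N) (v : V N) (x : Fin N → Fin 2) : ℂ :=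
  ∑ a : Fin 2, ∑ b : Fin 2, star (ψ (a, b)) * v (U2 x i j a b)

lemma twoSite_mulVec {N : ℕ} (ψ : Fin 2 × Fin 2 → ℂ) {i j : Fin N} (hij : i ≠ j) (v : V N)
    (x : Fin N → Fin 2) :
    (twoSite N (vecProj ψ) i j).mulVec v x = ψ (x i, x j) * ctrv ψ i j v x := by
  classical
  unfold Matrix.mulVec dotProduct twoSite vecProj
  have : ∀ y : Fin N → Fin 2,
      (ψ (x i, x j) * star (ψ (y i, y j))) *
        (∏ k : Fin N, if k = i ∨ k = j then 1 else (if x k = y k then (1:ℂ) else 0)) * v y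
      = ψ (x i, x j) * ((∏ k : Fin N, if k = i ∨ k = j then 1 else (if x k = y k then (1:ℂ) else 0)) * (star (ψ (y i, y j)) * v y)) := by
    intro y; ring
  rw [Finset.sum_congr rfl (fun y _ => this y), ← Finset.mul_sum,
    sum_delta_prod x hij (fun y => star (ψ (y i, y j)) * v y)]
  unfold ctrv
  congr 1
  refine Finset.sum_congr rfl fun a _ => Finset.sum_congr rfl fun b _ => ?_
  rw [U2_apply_i _ hij, U2_apply_j]


/-- "fully in the kernel": every projector contraction vanishes. -/
def FK (N : ℕ) (ψs : ℕ → Fin 2 × Fin 2 → ℂ) (v : V N) : Prop :=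
  ∀ (j : ℕ) (h : j + 1 < N) (x : Fin N → Fin 2),
    ctrv (ψs j) ⟨j, by omega⟩ ⟨j+1, h⟩ v x = 0

lemma fin_pair_ne {N : ℕ} (j : ℕ) (h : j + 1 < N) :
    (⟨j, by omega⟩ : Fin N) ≠ ⟨j+1, h⟩ := by
  simp [Fin.ext_iff]

lemma HnGen_mulVec_eq_zero {N : ℕ} (ψs : ℕ → Fin 2 × Fin 2 → ℂ) (v : V N)
    (hv : FK N ψs v) : (HnGen N ψs).mulVec v = 0 := by
  classical
  funext x
  unfold HnGen
  have : ∀ i : Fin N,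
      ((if h : (i : ℕ) + 1 < N then twoSite N (vecProj (ψs (i : ℕ))) i ⟨(i:ℕ)+1, h⟩ else 0) : Matrix _ _ ℂ).mulVec v x = 0 := by
    intro i
    by_cases h : (i : ℕ) + 1 < N
    · rw [dif_pos h]
      rw [twoSite_mulVec (ψs (i:ℕ)) (show i ≠ ⟨(i:ℕ)+1, h⟩ by simp [Fin.ext_iff]) v x]
      have h0 := hv (i:ℕ) h x
      have hi : (⟨(i:ℕ), by omega⟩ : Fin N) = i := by simp [Fin.ext_iff]
      rw [hi] at h0
      rw [h0, mul_zero]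
    · rw [dif_neg h]
      simp [Matrix.mulVec, dotProduct]
  have hsum : (∑ i : Fin N, (if h : (i : ℕ) + 1 < N then twoSite N (vecProj (ψs (i : ℕ))) i ⟨(i:ℕ)+1, h⟩ else 0)).mulVec v x
      = ∑ i : Fin N, ((if h : (i : ℕ) + 1 < N then twoSite N (vecProj (ψs (i : ℕ))) i ⟨(i:ℕ)+1, h⟩ else 0) : Matrix _ _ ℂ).mulVec v x := by
    unfold Matrix.mulVec dotProduct
    rw [Finset.sum_comm]
    refine Finset.sum_congr rfl fun y _ => ?_
    have h2 : (∑ c : Fin N, (if h : (c:ℕ) + 1 < N then twoSite N (vecProj (ψs (c:ℕ))) c ⟨(c:ℕ)+1, h⟩ else 0)) x y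
        = ∑ c : Fin N, ((if h : (c:ℕ) + 1 < N then twoSite N (vecProj (ψs (c:ℕ))) c ⟨(c:ℕ)+1, h⟩ else 0) : Matrix _ _ ℂ) x y := by
      rw [Matrix.sum_apply]
    show (∑ c : Fin N, (if h : (c:ℕ) + 1 < N then twoSite N (vecProj (ψs (c:ℕ))) c ⟨(c:ℕ)+1, h⟩ else 0)) x y * v y = _
    rw [h2, Finset.sum_mul]
  rw [hsum]
  simp [this]


/-! ### extension by one site -/

def res {N : ℕ} (x : Fin (N+1) → Fin 2) : Fin N → Fin 2 := fun k => x k.castSucc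

def ext {N : ℕ} (u : V N) (w : Fin 2 → ℂ) : V (N+1) :=
  fun x => u (res x) * w (x (Fin.last N))

lemma ext_add_left {N} (u u' : V N) (w) : ext (u + u') w = ext u w + ext u' w := by
  funext x; simp [ext, add_mul]

lemma ext_zero_left {N} (w) : ext (0 : V N) w = 0 := by funext x; simp [ext]

lemma ext_smul_left {N} (a : ℂ) (u : V N) (w) : ext (a • u) w = a • ext u w := by
  funext x; simp [ext, mul_assoc]

lemma ext_add_right {N} (u : V N) (w w' : Fin 2 → ℂ) :
    ext u (w + w') = ext u w + ext u w' := by funext x; simp [ext, mul_add]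

lemma ext_smul_right {N} (a : ℂ) (u : V N) (w : Fin 2 → ℂ) :
    ext u (a • w) = a • ext u w := by
  funext x; simp [ext]; ring

lemma ext_ne_zero {N} {u : V N} {w : Fin 2 → ℂ} (hu : u ≠ 0) (hw : w ≠ 0) :
    ext u w ≠ 0 := by
  obtain ⟨y, hy⟩ : ∃ y, u y ≠ 0 := by
    by_contra hc; push_neg at hc; exact hu (funext fun y => hc y)
  obtain ⟨b, hb⟩ : ∃ b, w b ≠ 0 := by
    by_contra hc; push_neg at hc; exact hw (funext fun b => hc b)
  intro hz
  have := congrFun hz (Fin.snoc y b)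
  simp only [ext, Pi.zero_apply] at this
  rw [show res (Fin.snoc y b) = y from funext fun k => Fin.snoc_castSucc _ _ _,
    Fin.snoc_last] at this
  exact mul_ne_zero hy hb this

/-- splitting lemma for independent last factors -/
def Indep2 (c d : Fin 2 → ℂ) : Prop :=
  ∀ x y : ℂ, x • c + y • d = 0 → x = 0 ∧ y = 0

lemma ext_split {N} {c d : Fin 2 → ℂ} (hcd : Indep2 c d) {X Y : V N}
    (h : ext X c + ext Y d = 0) : X = 0 ∧ Y = 0 := by
  have key : ∀ y, X y = 0 ∧ Y y = 0 := by
    intro y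
    have hres : res (Fin.snoc y (0 : Fin 2)) = y := funext fun k => Fin.snoc_castSucc _ _ _
    have h2 : (X y) • c + (Y y) • d = 0 := by
      funext b
      have := congrFun h (Function.update (Fin.snoc y (0 : Fin 2)) (Fin.last N) b)
      simp only [ext, Pi.add_apply, Pi.zero_apply, Function.update_self] at this
      have hres2 : res (Function.update (Fin.snoc y (0:Fin 2)) (Fin.last N) b) = y := by
        funext k
        simp only [res]
        rw [Function.update_of_ne (Fin.castSucc_lt_last k).ne, Fin.snoc_castSucc]
      rw [hres2] at this
      simpa [Pi.add_apply, Pi.smul_apply, smul_eq_mul] using this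
    exact hcd _ _ h2
  exact ⟨funext fun y => (key y).1, funext fun y => (key y).2⟩

/-! ### Fin index plumbing for contractions of extended vectors -/

lemma U2_res_low {N : ℕ} (x : Fin (N+1) → Fin 2) (j : ℕ) (h : j + 1 < N) (a b : Fin 2) :
    res (U2 x (⟨j, by omega⟩ : Fin (N+1)) ⟨j+1, by omega⟩ a b)
      = U2 (res x) (⟨j, by omega⟩ : Fin N) ⟨j+1, h⟩ a b := by
  funext k
  rcases eq_or_ne k (⟨j+1, h⟩ : Fin N) with rfl | hkj
  · have h1 : (Fin.castSucc (⟨j+1, h⟩ : Fin N)) = (⟨j+1, by omega⟩ : Fin (N+1)) := by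
      simp [Fin.ext_iff]
    simp only [res, h1, U2_apply_j]
  rcases eq_or_ne k (⟨j, by omega⟩ : Fin N) with rfl | hki
  · have h1 : (Fin.castSucc (⟨j, by omega⟩ : Fin N)) = (⟨j, by omega⟩ : Fin (N+1)) := by
      simp [Fin.ext_iff]
    have hne : (⟨j, by omega⟩ : Fin (N+1)) ≠ ⟨j+1, by omega⟩ := by simp [Fin.ext_iff]
    have hne2 : (⟨j, by omega⟩ : Fin N) ≠ ⟨j+1, h⟩ := by simp [Fin.ext_iff]
    simp only [res, h1]
    rw [U2_apply_i _ hne, U2_apply_i _ hne2]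
  · have h1 : (Fin.castSucc k) ≠ (⟨j, by omega⟩ : Fin (N+1)) := by
      simpa [Fin.ext_iff] using (by simpa [Fin.ext_iff] using hki : (k:ℕ) ≠ j)
    have h2 : (Fin.castSucc k) ≠ (⟨j+1, by omega⟩ : Fin (N+1)) := by
      simpa [Fin.ext_iff] using (by simpa [Fin.ext_iff] using hkj : (k:ℕ) ≠ j+1)
    simp only [res]
    rw [U2_apply_other _ h1 h2, U2_apply_other _ hki hkj]
    rfl

lemma U2_last_low {N : ℕ} (x : Fin (N+1) → Fin 2) (j : ℕ) (h : j + 1 < N) (a b : Fin 2) :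
    (U2 x (⟨j, by omega⟩ : Fin (N+1)) ⟨j+1, by omega⟩ a b) (Fin.last N) = x (Fin.last N) := by
  have h1 : (Fin.last N) ≠ (⟨j, by omega⟩ : Fin (N+1)) := by simp [Fin.ext_iff]; omega
  have h2 : (Fin.last N) ≠ (⟨j+1, by omega⟩ : Fin (N+1)) := by simp [Fin.ext_iff]; omega
  rw [U2_apply_other _ h1 h2]

lemma ctrv_add {N} (ψ) (i j : Fin N) (v w : V N) (x) :
    ctrv ψ i j (v + w) x = ctrv ψ i j v x + ctrv ψ i j w x := by
  simp [ctrv, mul_add, Finset.sum_add_distrib]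

lemma ctrv_smul {N} (ψ) (i j : Fin N) (a : ℂ) (v : V N) (x) :
    ctrv ψ i j (a • v) x = a * ctrv ψ i j v x := by
  simp only [ctrv, Finset.mul_sum, Pi.smul_apply, smul_eq_mul]
  refine Finset.sum_congr rfl fun a' _ => Finset.sum_congr rfl fun b' _ => by ring

lemma ctrv_zero {N} (ψ) (i j : Fin N) (x) : ctrv ψ i j (0 : V N) x = 0 := by
  simp [ctrv]

/-- contraction at a low pair of an extended vector factorizes -/
lemma ctrv_ext_low {N : ℕ} (ψ) (u : V N) (w : Fin 2 → ℂ) (j : ℕ) (h : j + 1 < N)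
    (x : Fin (N+1) → Fin 2) :
    ctrv ψ (⟨j, by omega⟩ : Fin (N+1)) ⟨j+1, by omega⟩ (ext u w) x
      = ctrv ψ (⟨j, by omega⟩ : Fin N) ⟨j+1, h⟩ u (res x) * w (x (Fin.last N)) := by
  unfold ctrv ext
  rw [Finset.sum_mul]
  refine Finset.sum_congr rfl fun a _ => ?_
  rw [Finset.sum_mul]
  refine Finset.sum_congr rfl fun b _ => ?_
  rw [U2_res_low x j h a b, U2_last_low x j h a b]
  ring

/-- the bilinear form -/
def Bform (ψ : Fin 2 × Fin 2 → ℂ) (z w : Fin 2 → ℂ) : ℂ :=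
  ∑ a : Fin 2, ∑ b : Fin 2, star (ψ (a, b)) * z a * w b

/-- contraction at the top pair of an extended vector -/
lemma ctrv_ext_top {M : ℕ} (ψ) (u : V (M+1)) (w : Fin 2 → ℂ) (x : Fin (M+2) → Fin 2) :
    ctrv ψ (⟨M, by omega⟩ : Fin (M+2)) ⟨M+1, by omega⟩ (ext u w) x
      = ∑ a : Fin 2, (∑ b : Fin 2, star (ψ (a, b)) * w b)
          * u (Function.update (res x) (Fin.last M) a) := by
  unfold ctrv ext
  refine Finset.sum_congr rfl fun a _ => ?_
  rw [Finset.sum_mul]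
  refine Finset.sum_congr rfl fun b _ => ?_
  have hij : (⟨M, by omega⟩ : Fin (M+2)) ≠ ⟨M+1, by omega⟩ := by simp [Fin.ext_iff]
  have h1 : res (U2 x (⟨M, by omega⟩ : Fin (M+2)) ⟨M+1, by omega⟩ a b)
      = Function.update (res x) (Fin.last M) a := by
    funext k
    rcases eq_or_ne k (Fin.last M) with rfl | hk
    · have : (Fin.castSucc (Fin.last M)) = (⟨M, by omega⟩ : Fin (M+2)) := by
        simp [Fin.ext_iff]
      simp only [res, this]
      rw [U2_apply_i _ hij, Function.update_self]
    · have hv : (k : ℕ) < M := by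
        have h3 := k.isLt
        have h4 : (k : ℕ) ≠ M := fun hh => hk (Fin.ext (by simpa using hh))
        omega
      have h1 : (Fin.castSucc k) ≠ (⟨M, by omega⟩ : Fin (M+2)) := by
        simp only [ne_eq, Fin.ext_iff, Fin.coe_castSucc]; omega
      have h2 : (Fin.castSucc k) ≠ (⟨M+1, by omega⟩ : Fin (M+2)) := by
        simp only [ne_eq, Fin.ext_iff, Fin.coe_castSucc]; omega
      simp only [res]
      rw [U2_apply_other _ h1 h2, Function.update_of_ne hk]
      rfl
  have h2 : (U2 x (⟨M, by omega⟩ : Fin (M+2)) ⟨M+1, by omega⟩ a b) (Fin.last (M+1)) = b := by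
    have : (Fin.last (M+1)) = (⟨M+1, by omega⟩ : Fin (M+2)) := by simp [Fin.ext_iff]
    rw [this, U2_apply_j]
  rw [h1, h2]
  ring

lemma ctrv_ext_top_ext {M : ℕ} (ψ) (uu : V M) (z w : Fin 2 → ℂ) (x : Fin (M+2) → Fin 2) :
    ctrv ψ (⟨M, by omega⟩ : Fin (M+2)) ⟨M+1, by omega⟩ (ext (ext uu z) w) x
      = uu (res (res x)) * Bform ψ z w := by
  rw [ctrv_ext_top]
  unfold Bform ext
  have h1 : ∀ a : Fin 2, res (Function.update (res x) (Fin.last M) a) = res (res x) := by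
    intro a
    funext k
    simp only [res]
    rw [Function.update_of_ne (Fin.castSucc_lt_last k).ne]
    rfl
  have h2 : ∀ a : Fin 2, (Function.update (res x) (Fin.last M) a) (Fin.last M) = a :=
    fun a => Function.update_self _ _ _
  rw [Finset.mul_sum]
  refine Finset.sum_congr rfl fun a _ => ?_
  rw [h1 a, h2 a, Finset.mul_sum, Finset.sum_mul]
  refine Finset.sum_congr rfl fun b _ => ?_
  ring


/-! ### the transfer map and 2x2 linear algebra -/

def Ms (ψ : Fin 2 × Fin 2 → ℂ) (a b : Fin 2) : ℂ := star (ψ (a, b))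

def Tmap (ψ : Fin 2 × Fin 2 → ℂ) (w : Fin 2 → ℂ) : Fin 2 → ℂ :=
  ![Ms ψ 0 1 * w 0 + Ms ψ 1 1 * w 1, -(Ms ψ 0 0 * w 0) - Ms ψ 1 0 * w 1]

def detM (ψ : Fin 2 × Fin 2 → ℂ) : ℂ := Ms ψ 0 0 * Ms ψ 1 1 - Ms ψ 0 1 * Ms ψ 1 0

lemma fin2_cases {P : Fin 2 → Prop} (h0 : P 0) (h1 : P 1) : ∀ a, P a := by
  intro a
  fin_cases a
  · exact h0
  · exact h1

lemma Bform_eq (ψ : Fin 2 × Fin 2 → ℂ) (z w : Fin 2 → ℂ) :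
    Bform ψ z w = Ms ψ 0 0 * z 0 * w 0 + Ms ψ 0 1 * z 0 * w 1
      + Ms ψ 1 0 * z 1 * w 0 + Ms ψ 1 1 * z 1 * w 1 := by
  simp only [Bform, Ms, Fin.sum_univ_two]
  ring

lemma Tmap_eval0 (ψ) (w : Fin 2 → ℂ) : Tmap ψ w 0 = Ms ψ 0 1 * w 0 + Ms ψ 1 1 * w 1 := rfl
lemma Tmap_eval1 (ψ) (w : Fin 2 → ℂ) : Tmap ψ w 1 = -(Ms ψ 0 0 * w 0) - Ms ψ 1 0 * w 1 := rfl

lemma Bform_Tmap_antisym (ψ : Fin 2 × Fin 2 → ℂ) (y z : Fin 2 → ℂ) :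
    Bform ψ y (Tmap ψ z) + Bform ψ z (Tmap ψ y) = 0 := by
  rw [Bform_eq, Bform_eq, Tmap_eval0, Tmap_eval0, Tmap_eval1, Tmap_eval1]
  ring

lemma Bform_Tmap_self (ψ : Fin 2 × Fin 2 → ℂ) (y : Fin 2 → ℂ) :
    Bform ψ y (Tmap ψ y) = 0 := by
  have h2 : (2:ℂ) * Bform ψ y (Tmap ψ y) = 0 := by
    linear_combination Bform_Tmap_antisym ψ y y
  have := mul_eq_zero.mp h2
  simpa using this

lemma Tmap_linear (ψ : Fin 2 × Fin 2 → ℂ) (x y : ℂ) (u v : Fin 2 → ℂ) :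
    Tmap ψ (x • u + y • v) = x • Tmap ψ u + y • Tmap ψ v := by
  funext a
  revert a
  refine fin2_cases ?_ ?_
  · simp only [Pi.add_apply, Pi.smul_apply, smul_eq_mul, Tmap_eval0]
    ring
  · simp only [Pi.add_apply, Pi.smul_apply, smul_eq_mul, Tmap_eval1]
    ring

lemma Tmap_inj (ψ : Fin 2 × Fin 2 → ℂ) (hdet : detM ψ ≠ 0) {u : Fin 2 → ℂ}
    (hu : Tmap ψ u = 0) : u = 0 := by
  have h0 := congrFun hu 0
  have h1 := congrFun hu 1
  rw [Tmap_eval0] at h0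
  rw [Tmap_eval1] at h1
  simp only [Pi.zero_apply] at h0 h1
  have hu0 : u 0 = 0 := by
    have hmul : detM ψ * u 0 = 0 := by
      unfold detM
      linear_combination (-(Ms ψ 1 0)) * h0 - (Ms ψ 1 1) * h1
    exact (mul_eq_zero.mp hmul).resolve_left hdet
  have hu1 : u 1 = 0 := by
    have hmul : detM ψ * u 1 = 0 := by
      unfold detM
      linear_combination (Ms ψ 0 0) * h0 + (Ms ψ 0 1) * h1
    exact (mul_eq_zero.mp hmul).resolve_left hdet
  funext a
  revert a
  refine fin2_cases ?_ ?_
  · exact hu0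
  · exact hu1

lemma vne0 {p q : ℂ} (h : ¬(p = 0 ∧ q = 0)) : (![p, q] : Fin 2 → ℂ) ≠ 0 := by
  intro hc
  have h0 := congrFun hc 0
  have h1 := congrFun hc 1
  simp only [Matrix.cons_val_zero, Matrix.cons_val_one, Matrix.head_cons, Pi.zero_apply] at h0 h1
  exact h ⟨h0, h1⟩

/-- in the singular case there is a vector annihilated from the left slot -/
lemma exists_ker (ψ : Fin 2 × Fin 2 → ℂ) (hdet : detM ψ = 0) :
    ∃ s : Fin 2 → ℂ, s ≠ 0 ∧ ∀ a : Fin 2, (∑ b : Fin 2, star (ψ (a, b)) * s b) = 0 := by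
  have hsum : ∀ (a : Fin 2) (s : Fin 2 → ℂ),
      (∑ b : Fin 2, star (ψ (a, b)) * s b) = Ms ψ a 0 * s 0 + Ms ψ a 1 * s 1 := by
    intro a s
    simp only [Ms, Fin.sum_univ_two]
  by_cases h0 : Ms ψ 0 0 = 0 ∧ Ms ψ 0 1 = 0
  · by_cases h1 : Ms ψ 1 0 = 0 ∧ Ms ψ 1 1 = 0
    · refine ⟨![1, 0], vne0 (by simp), ?_⟩
      refine fin2_cases ?_ ?_ <;>
        rw [hsum] <;>
        simp only [Matrix.cons_val_zero, Matrix.cons_val_one, Matrix.head_cons,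
          h0.1, h0.2, h1.1, h1.2] <;> ring
    · refine ⟨![Ms ψ 1 1, -(Ms ψ 1 0)], vne0 ?_, ?_⟩
      · intro hc
        exact h1 ⟨by simpa using hc.2, hc.1⟩
      · refine fin2_cases ?_ ?_ <;>
          rw [hsum] <;>
          simp only [Matrix.cons_val_zero, Matrix.cons_val_one, Matrix.head_cons]
        · rw [h0.1, h0.2]; ring
        · ring
  · refine ⟨![Ms ψ 0 1, -(Ms ψ 0 0)], vne0 ?_, ?_⟩
    · intro hc
      exact h0 ⟨by simpa using hc.2, hc.1⟩
    · refine fin2_cases ?_ ?_ <;>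
        rw [hsum] <;>
        simp only [Matrix.cons_val_zero, Matrix.cons_val_one, Matrix.head_cons]
      · ring
      · unfold detM at hdet
        linear_combination -hdet

lemma Indep2.symm {c d : Fin 2 → ℂ} (h : Indep2 c d) : Indep2 d c := by
  intro x y hxy
  have := h y x (by rw [add_comm]; exact hxy)
  exact ⟨this.2, this.1⟩

lemma exists_t_indep (s : Fin 2 → ℂ) (hs : s ≠ 0) : ∃ t : Fin 2 → ℂ, Indep2 s t := by
  by_cases h0 : s 0 = 0
  · have h1 : s 1 ≠ 0 := by
      intro hc; apply hs; funext a
      revert a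
      refine fin2_cases ?_ ?_
      · exact h0
      · exact hc
    refine ⟨![1, 0], ?_⟩
    intro x y hxy
    have e0 := congrFun hxy 0
    have e1 := congrFun hxy 1
    simp only [Pi.add_apply, Pi.smul_apply, smul_eq_mul, Matrix.cons_val_zero,
      Matrix.cons_val_one, Matrix.head_cons, Pi.zero_apply, h0, mul_zero, mul_one,
      mul_zero, zero_add, add_zero] at e0 e1
    refine ⟨?_, e0⟩
    rcases mul_eq_zero.mp e1 with e | e
    · exact e
    · exact absurd e h1
  · refine ⟨![0, 1], ?_⟩
    intro x y hxy
    have e0 := congrFun hxy 0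
    have e1 := congrFun hxy 1
    simp only [Pi.add_apply, Pi.smul_apply, smul_eq_mul, Matrix.cons_val_zero,
      Matrix.cons_val_one, Matrix.head_cons, Pi.zero_apply, mul_zero, mul_one,
      add_zero] at e0 e1
    have hx : x = 0 := by
      rcases mul_eq_zero.mp e0 with e | e
      · exact e
      · exact absurd e h0
    refine ⟨hx, ?_⟩
    rw [hx, zero_mul, zero_add] at e1
    exact e1

lemma exists_perp (L : Fin 2 → ℂ) :
    ∃ r : Fin 2 → ℂ, r ≠ 0 ∧ r 0 * L 0 + r 1 * L 1 = 0 := by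
  by_cases h : L 0 = 0 ∧ L 1 = 0
  · refine ⟨![1, 0], vne0 (by simp), ?_⟩
    simp only [Matrix.cons_val_zero, Matrix.cons_val_one, Matrix.head_cons, h.1, h.2]
    ring
  · refine ⟨![L 1, -(L 0)], vne0 ?_, ?_⟩
    · intro hc
      refine h ⟨?_, hc.1⟩
      have := hc.2
      simpa using this
    · simp only [Matrix.cons_val_zero, Matrix.cons_val_one, Matrix.head_cons]
      ring

/-! ### product states -/

def prodV {N : ℕ} (u : ℕ → Fin 2 → ℂ) : V N := fun x => ∏ k : Fin N, u (k : ℕ) (x k)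

lemma prodV_succ {N : ℕ} (u : ℕ → Fin 2 → ℂ) :
    (prodV u : V (N+1)) = ext (prodV u : V N) (u N) := by
  funext x
  unfold prodV ext
  rw [Fin.prod_univ_castSucc]
  congr 1

lemma prodV_ne_zero {N : ℕ} (u : ℕ → Fin 2 → ℂ) (hu : ∀ k, k < N → u k ≠ 0) :
    (prodV u : V N) ≠ 0 := by
  classical
  set x : Fin N → Fin 2 := fun k => if u (k:ℕ) 0 = 0 then 1 else 0 with hx
  intro hc
  have := congrFun hc x
  simp only [Pi.zero_apply, prodV] at this
  have : ∃ k ∈ (Finset.univ : Finset (Fin N)), u (k:ℕ) (x k) = 0 :=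
    Finset.prod_eq_zero_iff.mp this
  obtain ⟨k, _, hk⟩ := this
  by_cases h : u (k:ℕ) 0 = 0
  · have hx1 : x k = 1 := by simp [hx, h]
    rw [hx1] at hk
    apply hu (k:ℕ) k.isLt
    funext a
    rcases Fin.exists_fin_two.mp ⟨a, rfl⟩ with ha | ha <;> subst ha <;> simpa [h, hk]
  · have hx1 : x k = 0 := by simp [hx, h]
    rw [hx1] at hk
    exact h hk

lemma FK_prodV {N : ℕ} (ψs : ℕ → Fin 2 × Fin 2 → ℂ) (u : ℕ → Fin 2 → ℂ)
    (hB : ∀ j, j + 1 < N → Bform (ψs j) (u j) (u (j+1)) = 0) : FK N ψs (prodV u) := by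
  classical
  intro j h x
  set i1 : Fin N := ⟨j, by omega⟩
  set i2 : Fin N := ⟨j+1, h⟩
  have hij : i1 ≠ i2 := fin_pair_ne j h
  have hkey : ∀ a b : Fin 2, (prodV u : V N) (U2 x i1 i2 a b)
      = u j a * (u (j+1) b * ∏ k ∈ (Finset.univ \ {i2}) \ {i1}, u (k:ℕ) (x k)) := by
    intro a b
    unfold prodV
    have h2 : ∀ y : Fin N → Fin 2, ∏ k : Fin N, u (k:ℕ) (y k)
        = u ((i2:ℕ)) (y i2) * ∏ k ∈ Finset.univ \ {i2}, u (k:ℕ) (y k) :=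
      fun y => Finset.prod_eq_mul_prod_sdiff_singleton_of_mem (Finset.mem_univ i2) _
    rw [h2]
    have h3 : ∏ k ∈ Finset.univ \ {i2}, u (k:ℕ) ((U2 x i1 i2 a b) k)
        = u ((i1:ℕ)) ((U2 x i1 i2 a b) i1) * ∏ k ∈ (Finset.univ \ {i2}) \ {i1}, u (k:ℕ) ((U2 x i1 i2 a b) k) := by
      refine Finset.prod_eq_mul_prod_sdiff_singleton_of_mem ?_ _
      simp [Finset.mem_sdiff, hij]
    rw [h3, U2_apply_i _ hij, U2_apply_j]
    have h4 : ∏ k ∈ (Finset.univ \ {i2}) \ {i1}, u (k:ℕ) ((U2 x i1 i2 a b) k)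
        = ∏ k ∈ (Finset.univ \ {i2}) \ {i1}, u (k:ℕ) (x k) := by
      refine Finset.prod_congr rfl fun k hk => ?_
      simp only [Finset.mem_sdiff, Finset.mem_singleton] at hk
      rw [U2_apply_other _ hk.2 hk.1.2]
    rw [h4]
    ring
  unfold ctrv
  have : ∀ a b : Fin 2, star ((ψs j) (a,b)) * (prodV u : V N) (U2 x i1 i2 a b)
      = (star ((ψs j) (a,b)) * u j a * u (j+1) b) * ∏ k ∈ (Finset.univ \ {i2}) \ {i1}, u (k:ℕ) (x k) := by
    intro a b; rw [hkey a b]; ring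
  calc ∑ a : Fin 2, ∑ b : Fin 2, star ((ψs j) (a,b)) * (prodV u : V N) (U2 x i1 i2 a b)
      = (∑ a : Fin 2, ∑ b : Fin 2, star ((ψs j) (a,b)) * u j a * u (j+1) b) * ∏ k ∈ (Finset.univ \ {i2}) \ {i1}, u (k:ℕ) (x k) := by
        rw [Finset.sum_mul]
        refine Finset.sum_congr rfl fun a _ => ?_
        rw [Finset.sum_mul]
        exact Finset.sum_congr rfl fun b _ => this a b
    _ = 0 := by
        have hb : (∑ a : Fin 2, ∑ b : Fin 2, star ((ψs j) (a,b)) * u j a * u (j+1) b)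
            = Bform (ψs j) (u j) (u (j+1)) := rfl
        rw [hb, hB j h, zero_mul]

/-- backward construction of a product kernel state with prescribed last factor -/
lemma exists_back (m : ℕ) (ψs : ℕ → Fin 2 × Fin 2 → ℂ) (r : Fin 2 → ℂ) (hr : r ≠ 0) :
    ∃ ρ : V (m+1), FK (m+1) ψs ρ ∧ ρ ≠ 0 ∧ ∃ ρ' : V m, ρ = ext ρ' r := by
  classical
  -- downward recursion
  have step : ∀ ψ : Fin 2 × Fin 2 → ℂ, ∀ w : Fin 2 → ℂ,
      ∃ v : Fin 2 → ℂ, v ≠ 0 ∧ Bform ψ v w = 0 := by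
    intro ψ w
    obtain ⟨v, hv0, hv⟩ := exists_perp (fun a => ∑ b : Fin 2, star (ψ (a, b)) * w b)
    refine ⟨v, hv0, ?_⟩
    unfold Bform
    rw [Fin.sum_univ_two]
    simp only [Fin.sum_univ_two] at hv ⊢
    linear_combination hv
  let f : ℕ → Fin 2 → ℂ := fun i => Nat.rec r
    (fun i fi => Classical.choose (step (ψs (m - 1 - i)) fi)) i
  have hf0 : f 0 = r := rfl
  have hfsucc : ∀ i, f (i+1) = Classical.choose (step (ψs (m - 1 - i)) (f i)) := fun i => rfl
  have hfne : ∀ i, f i ≠ 0 := by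
    intro i
    induction i with
    | zero => exact hr
    | succ i ih =>
      rw [hfsucc i]
      exact (Classical.choose_spec (step (ψs (m - 1 - i)) (f i))).1
  have hfB : ∀ i, Bform (ψs (m - 1 - i)) (f (i+1)) (f i) = 0 := by
    intro i
    rw [hfsucc i]
    exact (Classical.choose_spec (step (ψs (m - 1 - i)) (f i))).2
  set u : ℕ → Fin 2 → ℂ := fun j => f (m - j) with hu
  refine ⟨prodV u, ?_, ?_, ?_⟩
  · apply FK_prodV
    intro j hj
    have h1 : m - j = (m - j - 1) + 1 := by omega
    have h2 : m - 1 - (m - j - 1) = j := by omega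
    have h3 : m - (j+1) = m - j - 1 := by omega
    show Bform (ψs j) (f (m - j)) (f (m - (j+1))) = 0
    rw [h1, h3]
    have := hfB (m - j - 1)
    rw [h2] at this
    exact this
  · exact prodV_ne_zero u (fun k _ => hfne _)
  · refine ⟨prodV u, ?_⟩
    have hum : u m = r := by
      show f (m - m) = r
      rw [Nat.sub_self]
      exact hf0
    rw [prodV_succ, hum]


/-! ### more helpers -/

lemma FK_zero {N : ℕ} (ψs : ℕ → Fin 2 × Fin 2 → ℂ) : FK N ψs (0 : V N) :=
  fun j h x => ctrv_zero _ _ _ _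

lemma FK_add {N : ℕ} {ψs : ℕ → Fin 2 × Fin 2 → ℂ} {v w : V N} (hv : FK N ψs v)
    (hw : FK N ψs w) : FK N ψs (v + w) := by
  intro j h x
  rw [ctrv_add, hv j h x, hw j h x, add_zero]

lemma ext_sum {N : ℕ} {ι : Type*} (s : Finset ι) (f : ι → V N) (w0 : Fin 2 → ℂ) :
    ext (∑ i ∈ s, f i) w0 = ∑ i ∈ s, ext (f i) w0 := by
  classical
  induction s using Finset.induction_on with
  | empty => simp [ext_zero_left]
  | insert _ _ h ih => rw [Finset.sum_insert h, Finset.sum_insert h, ext_add_left, ih]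

lemma sum_range_add' {A : Type*} [AddCommMonoid A] (F : ℕ → A) (a b : ℕ) :
    ∑ i ∈ Finset.range (a + b), F i
      = (∑ i ∈ Finset.range a, F i) + ∑ j ∈ Finset.range b, F (a + j) := by
  induction b with
  | zero => simp
  | succ b ih =>
      rw [Nat.add_succ, Finset.sum_range_succ, Finset.sum_range_succ, ih, add_assoc]

lemma FK_ext_of_top {m : ℕ} (ψs : ℕ → Fin 2 × Fin 2 → ℂ) (u : V (m+1)) (w0 : Fin 2 → ℂ)
    (hu : FK (m+1) ψs u)
    (htop : ∀ x : Fin (m+2) → Fin 2,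
      ctrv (ψs m) (⟨m, by omega⟩ : Fin (m+2)) ⟨m+1, by omega⟩ (ext u w0) x = 0) :
    FK (m+2) ψs (ext u w0) := by
  intro j h x
  by_cases hj : j + 1 < m + 1
  · rw [ctrv_ext_low _ _ _ j hj x, hu j hj (res x), zero_mul]
  · have hjm : j = m := by omega
    subst hjm
    exact htop x

lemma ctrv_ext_top_ker {m : ℕ} (ψ : Fin 2 × Fin 2 → ℂ) (u : V (m+1)) {w0 : Fin 2 → ℂ}
    (hker : ∀ a : Fin 2, (∑ b : Fin 2, star (ψ (a, b)) * w0 b) = 0)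
    (x : Fin (m+2) → Fin 2) :
    ctrv ψ (⟨m, by omega⟩ : Fin (m+2)) ⟨m+1, by omega⟩ (ext u w0) x = 0 := by
  rw [ctrv_ext_top]
  refine Finset.sum_eq_zero fun a _ => ?_
  rw [hker a, zero_mul]

lemma indep2_expand {c d : Fin 2 → ℂ} (hcd : Indep2 c d) (γ : Fin 2 → ℂ) :
    ∃ α β : ℂ, γ = α • c + β • d := by
  set δ : ℂ := c 0 * d 1 - c 1 * d 0 with hδ
  have hδ0 : δ ≠ 0 := by
    intro hzero
    by_cases hc : c 0 = 0 ∧ c 1 = 0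
    · have h1 := hcd 1 0 (by
        funext a
        revert a
        refine fin2_cases ?_ ?_ <;>
          simp [hc.1, hc.2])
      exact one_ne_zero h1.1
    · rcases not_and_or.mp hc with h | h
      · push_neg at h
        have hcombo : (d 0) • c + (-(c 0)) • d = 0 := by
          funext a
          revert a
          refine fin2_cases ?_ ?_ <;>
            simp only [Pi.add_apply, Pi.smul_apply, smul_eq_mul, Pi.zero_apply]
          · ring
          · linear_combination -hzero
        exact h (by simpa using (hcd _ _ hcombo).2)
      · push_neg at h
        have hcombo : (d 1) • c + (-(c 1)) • d = 0 := by
          funext a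
          revert a
          refine fin2_cases ?_ ?_ <;>
            simp only [Pi.add_apply, Pi.smul_apply, smul_eq_mul, Pi.zero_apply]
          · linear_combination hzero
          · ring
        exact h (by simpa using (hcd _ _ hcombo).2)
  refine ⟨(γ 0 * d 1 - γ 1 * d 0)/δ, (c 0 * γ 1 - c 1 * γ 0)/δ, ?_⟩
  funext a
  revert a
  refine fin2_cases ?_ ?_ <;>
    simp only [Pi.add_apply, Pi.smul_apply, smul_eq_mul] <;>
    field_simp <;>
    ring

/-! ### the inductive invariant -/

def IndepFam (N cnt : ℕ) (w : ℕ → V N) : Prop :=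
  ∀ g : ℕ → ℂ, (∑ i ∈ Finset.range cnt, g i • w i) = 0 → ∀ i < cnt, g i = 0

def Inv (ψs : ℕ → Fin 2 × Fin 2 → ℂ) (m : ℕ) : Prop :=
  ∃ (K : ℕ) (w : ℕ → V (m+1)) (q : ℕ → V m) (c d γ : Fin 2 → ℂ),
    K ≤ m + 1 ∧ Indep2 c d ∧ γ ≠ 0 ∧
    q 0 = 0 ∧ (∀ j, m + 3 - K ≤ j → q j = 0) ∧
    (∀ j, FK m ψs (q j)) ∧
    (∀ i, FK (m+1) ψs (w i)) ∧
    (∀ i, i < K → ∃ u : V m, w i = ext u γ) ∧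
    (∀ j, w (K + j) = ext (q (j+1)) c + ext (q j) d) ∧
    IndepFam (m+1) (m+2) w

def oneV : V 0 := fun _ => 1
def qZero : ℕ → V 0 := fun j => if j = 1 then oneV else 0
def cE : Fin 2 → ℂ := ![1, 0]
def dE : Fin 2 → ℂ := ![0, 1]
def wZero : ℕ → V 1 := fun i => ext (qZero (i+1)) cE + ext (qZero i) dE

lemma inv_zero (ψs : ℕ → Fin 2 × Fin 2 → ℂ) : Inv ψs 0 := by
  classical
  have hcd : Indep2 cE dE := by
    intro x y hxy
    have e0 := congrFun hxy 0
    have e1 := congrFun hxy 1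
    simp [cE, dE] at e0 e1
    exact ⟨e0, e1⟩
  refine ⟨0, wZero, qZero, cE, dE, cE, by omega, hcd, ?_, ?_, ?_, ?_, ?_, ?_, ?_, ?_⟩
  · intro hcc
    have := congrFun hcc 0
    simp [cE] at this
  · simp [qZero]
  · intro j hj
    simp only [qZero]
    rw [if_neg (by omega)]
  · intro j j' h x
    omega
  · intro i j' h x
    omega
  · intro i hi
    omega
  · intro j
    simp only [wZero, Nat.zero_add]
  · intro g hsum i hi
    have hw0 : wZero 0 = ext oneV cE := by
      simp [wZero, qZero, ext_zero_left]
    have hw1 : wZero 1 = ext oneV dE := by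
      simp [wZero, qZero, ext_zero_left]
    simp only [Finset.sum_range_succ, Finset.sum_range_zero, zero_add] at hsum
    have hsum2 : ext (g 0 • oneV) cE + ext (g 1 • oneV) dE = 0 := by
      rw [ext_smul_left, ext_smul_left, ← hw0, ← hw1]
      exact hsum
    obtain ⟨h0, h1⟩ := ext_split hcd hsum2
    have hpt : ∀ z : ℂ, z • oneV = 0 → z = 0 := by
      intro z hz
      have := congrFun hz (fun k => k.elim0)
      simpa [oneV] using this
    interval_cases i
    · exact hpt _ h0
    · exact hpt _ h1


def qS (m : ℕ) (ρ : V (m+1)) : ℕ → V (m+1) := fun j => if j = 1 then ρ else 0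

def wS (m : ℕ) (w : ℕ → V (m+1)) (ρ : V (m+1)) (t s : Fin 2 → ℂ) : ℕ → V (m+2) :=
  fun i => if i < m + 2 then ext (w i) s
    else ext (qS m ρ (i - (m+2) + 1)) t + ext (qS m ρ (i - (m+2))) s

lemma inv_step_sing (ψs : ℕ → Fin 2 × Fin 2 → ℂ) (m : ℕ) (hdet : detM (ψs m) = 0)
    (h : Inv ψs m) : Inv ψs (m+1) := by
  classical
  obtain ⟨K, w, q, c, d, γ, hK, hcd, hγ, hq0, hqhi, hqFK, hwFK, hlast, hform, hind⟩ := h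
  obtain ⟨s, hs0, hsker⟩ := exists_ker (ψs m) hdet
  obtain ⟨t, hst⟩ := exists_t_indep s hs0
  obtain ⟨r, hr0, hrL⟩ := exists_perp (fun a => ∑ b : Fin 2, star ((ψs m) (a, b)) * t b)
  have hBrt : Bform (ψs m) r t = 0 := by
    have h2 := hrL
    simp only [Fin.sum_univ_two] at h2
    rw [Bform_eq]
    simp only [Ms]
    linear_combination h2
  obtain ⟨ρ, hρFK, hρ0, ρ', hρext⟩ := exists_back m ψs r hr0
  refine ⟨m + 2, wS m w ρ t s, qS m ρ, t, s, s, by omega, hst.symm, hs0, ?_, ?_, ?_, ?_, ?_, ?_, ?_⟩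
  · simp [qS]
  · intro j hj
    simp only [qS]
    rw [if_neg (by omega)]
  · intro j
    by_cases hj : j = 1
    · subst hj
      simpa [qS] using hρFK
    · simp only [qS]
      rw [if_neg hj]
      exact FK_zero ψs
  · intro i
    by_cases hi : i < m + 2
    · have hwi : wS m w ρ t s i = ext (w i) s := by simp [wS, hi]
      rw [hwi]
      exact FK_ext_of_top ψs (w i) s (hwFK i) (fun x => ctrv_ext_top_ker (ψs m) (w i) hsker x)
    · by_cases hj0 : i - (m+2) = 0
      · have hwi : wS m w ρ t s i = ext ρ t + ext (0 : V (m+1)) s := by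
          simp only [wS, qS]
          rw [if_neg hi, hj0]
          norm_num
        rw [hwi]
        refine FK_add ?_ ?_
        · refine FK_ext_of_top ψs ρ t hρFK ?_
          intro x
          rw [hρext, ctrv_ext_top_ext, hBrt, mul_zero]
        · rw [ext_zero_left]
          exact FK_zero ψs
      · by_cases hj1 : i - (m+2) = 1
        · have hwi : wS m w ρ t s i = ext (0 : V (m+1)) t + ext ρ s := by
            simp only [wS, qS]
            rw [if_neg hi, hj1]
            norm_num
          rw [hwi]
          refine FK_add ?_ ?_
          · rw [ext_zero_left]
            exact FK_zero ψs
          · exact FK_ext_of_top ψs ρ s hρFK (fun x => ctrv_ext_top_ker (ψs m) ρ hsker x)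
        · have hwi : wS m w ρ t s i = 0 := by
            simp only [wS, qS]
            rw [if_neg hi, if_neg (by omega), if_neg hj1, ext_zero_left, ext_zero_left, add_zero]
          rw [hwi]
          exact FK_zero ψs
  · intro i hi
    exact ⟨w i, by simp [wS, hi]⟩
  · intro j
    have h1 : ¬ (m + 2 + j < m + 2) := by omega
    have h2 : m + 2 + j - (m + 2) = j := by omega
    simp only [wS]
    rw [if_neg h1, h2]
  · intro g hsum i0 hi0
    rw [Finset.sum_range_succ] at hsum
    have hw'm2 : wS m w ρ t s (m+2) = ext ρ t := by
      simp only [wS, qS]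
      rw [if_neg (by omega)]
      norm_num [ext_zero_left]
    have hrest : ∑ i ∈ Finset.range (m+2), g i • wS m w ρ t s i
        = ext (∑ i ∈ Finset.range (m+2), g i • w i) s := by
      rw [ext_sum]
      refine Finset.sum_congr rfl fun i hi => ?_
      have hi' : i < m + 2 := Finset.mem_range.mp hi
      rw [show wS m w ρ t s i = ext (w i) s by simp [wS, hi'], ext_smul_left]
    rw [hrest, hw'm2] at hsum
    have hsum2 : ext (∑ i ∈ Finset.range (m+2), g i • w i) s + ext (g (m+2) • ρ) t = 0 := by
      rw [ext_smul_left]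
      exact hsum
    obtain ⟨hX, hY⟩ := ext_split hst hsum2
    by_cases hi2 : i0 < m + 2
    · exact hind g hX i0 hi2
    · have hieq : i0 = m + 2 := by omega
      subst hieq
      rcases smul_eq_zero.mp hY with h | h
      · exact h
      · exact absurd h hρ0


def qNS (m : ℕ) (w : ℕ → V (m+1)) (K : ℕ) : ℕ → V (m+1) :=
  fun j => if j = 0 then 0 else w (K + (j - 1))

def wNS (m : ℕ) (ψ : Fin 2 × Fin 2 → ℂ) (w : ℕ → V (m+1)) (K : ℕ)
    (c d γ : Fin 2 → ℂ) : ℕ → V (m+2) :=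
  fun i => if i < K then ext (w i) (Tmap ψ γ)
    else ext (qNS m w K (i - K + 1)) (Tmap ψ c) + ext (qNS m w K (i - K)) (Tmap ψ d)

lemma inv_step_ns (ψs : ℕ → Fin 2 × Fin 2 → ℂ) (m : ℕ) (hdet : detM (ψs m) ≠ 0)
    (h : Inv ψs m) : Inv ψs (m+1) := by
  classical
  obtain ⟨K, w, q, c, d, γ, hK, hcd, hγ, hq0, hqhi, hqFK, hwFK, hlast, hform, hind⟩ := h
  have hTcd : Indep2 (Tmap (ψs m) c) (Tmap (ψs m) d) := by
    intro x y hxy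
    have hT : Tmap (ψs m) (x • c + y • d) = 0 := by rw [Tmap_linear]; exact hxy
    exact hcd x y (Tmap_inj (ψs m) hdet hT)
  have hTγ : Tmap (ψs m) γ ≠ 0 := fun hc => hγ (Tmap_inj (ψs m) hdet hc)
  have hq'0 : qNS m w K 0 = 0 := by simp [qNS]
  have hq'FK : ∀ j, FK (m+1) ψs (qNS m w K j) := by
    intro j
    by_cases hj : j = 0
    · subst hj
      rw [hq'0]
      exact FK_zero ψs
    · simp only [qNS]
      rw [if_neg hj]
      exact hwFK _
  have hq'form : ∀ j, 1 ≤ j → qNS m w K j = ext (q j) c + ext (q (j-1)) d := by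
    intro j hj
    simp only [qNS]
    rw [if_neg (by omega), hform (j-1)]
    have h1 : j - 1 + 1 = j := by omega
    rw [h1]
  have hq'succ : ∀ j, qNS m w K (j+1) = w (K + j) := by
    intro j
    simp only [qNS]
    rw [if_neg (by omega)]
    congr 1
  have hfamFK : ∀ j, FK (m+2) ψs
      (ext (qNS m w K (j+1)) (Tmap (ψs m) c) + ext (qNS m w K j) (Tmap (ψs m) d)) := by
    intro j j' h x
    by_cases hj' : j' + 1 < m + 1
    · rw [ctrv_add, ctrv_ext_low _ _ _ j' hj' x, ctrv_ext_low _ _ _ j' hj' x,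
        hq'FK (j+1) j' hj' (res x), hq'FK j j' hj' (res x), zero_mul, zero_mul, add_zero]
    · have hjm : m = j' := by omega
      subst hjm
      rw [ctrv_add]
      by_cases hj0 : j = 0
      · subst hj0
        have e1 : qNS m w K 1 = ext (q 1) c + ext (q 0) d := hq'form 1 (le_refl 1)
        rw [e1, hq'0, ext_zero_left, ctrv_zero, add_zero, ext_add_left, ctrv_add,
          ctrv_ext_top_ext, ctrv_ext_top_ext, hq0]
        simp only [Pi.zero_apply, zero_mul, add_zero]
        rw [Bform_Tmap_self, mul_zero]
      · have e1 : qNS m w K (j+1) = ext (q (j+1)) c + ext (q j) d := by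
          have h2 := hq'form (j+1) (by omega)
          simpa using h2
        have e2 : qNS m w K j = ext (q j) c + ext (q (j-1)) d := hq'form j (by omega)
        rw [e1, e2, ext_add_left, ext_add_left, ctrv_add, ctrv_add,
          ctrv_ext_top_ext, ctrv_ext_top_ext, ctrv_ext_top_ext, ctrv_ext_top_ext]
        linear_combination (q (j+1) (res (res x))) * Bform_Tmap_self (ψs m) c
          + (q (j-1) (res (res x))) * Bform_Tmap_self (ψs m) d
          + (q j (res (res x))) * Bform_Tmap_antisym (ψs m) d c
  refine ⟨K, wNS m (ψs m) w K c d γ, qNS m w K, Tmap (ψs m) c, Tmap (ψs m) d,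
    Tmap (ψs m) γ, by omega, hTcd, hTγ, hq'0, ?_, hq'FK, ?_, ?_, ?_, ?_⟩
  · -- high zeros
    intro j hj
    rw [hq'form j (by omega), hqhi j (by omega), hqhi (j-1) (by omega),
      ext_zero_left, ext_zero_left, add_zero]
  · -- FK for all new family vectors
    intro i
    by_cases hiK : i < K
    · rw [show wNS m (ψs m) w K c d γ i = ext (w i) (Tmap (ψs m) γ) by simp [wNS, hiK]]
      obtain ⟨u, hu⟩ := hlast i hiK
      refine FK_ext_of_top ψs (w i) _ (hwFK i) ?_
      intro x
      rw [hu, ctrv_ext_top_ext, Bform_Tmap_self, mul_zero]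
    · rw [show wNS m (ψs m) w K c d γ i
          = ext (qNS m w K (i - K + 1)) (Tmap (ψs m) c)
            + ext (qNS m w K (i - K)) (Tmap (ψs m) d) by simp [wNS, hiK]]
      exact hfamFK (i - K)
  · -- last factor structure
    intro i hi
    exact ⟨w i, by simp [wNS, hi]⟩
  · -- family form
    intro j
    simp only [wNS]
    rw [if_neg (by omega)]
    have h1 : K + j - K = j := by omega
    rw [h1]
  · -- independence
    intro g hsum i0 hi0
    obtain ⟨α, β, hγab⟩ := indep2_expand hcd γ
    have hTγab : Tmap (ψs m) γ = α • Tmap (ψs m) c + β • Tmap (ψs m) d := by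
      rw [hγab, Tmap_linear]
    have hKL : K + (m + 1 - K) = m + 1 := by omega
    set L := m + 1 - K with hLdef
    have hcnt : m + 1 + 2 = K + (L + 2) := by omega
    rw [hcnt, sum_range_add'] at hsum
    have hblock1 : ∑ i ∈ Finset.range K, g i • wNS m (ψs m) w K c d γ i
        = ext (∑ i ∈ Finset.range K, (g i * α) • w i) (Tmap (ψs m) c)
          + ext (∑ i ∈ Finset.range K, (g i * β) • w i) (Tmap (ψs m) d) := by
      rw [ext_sum, ext_sum, ← Finset.sum_add_distrib]
      refine Finset.sum_congr rfl fun i hi => ?_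
      have hiK : i < K := Finset.mem_range.mp hi
      rw [show wNS m (ψs m) w K c d γ i = ext (w i) (Tmap (ψs m) γ) by simp [wNS, hiK]]
      rw [hTγab, ext_add_right, ext_smul_right, ext_smul_right,
        ext_smul_left, ext_smul_left, smul_add, smul_smul, smul_smul]
    have hblock2 : ∑ j ∈ Finset.range (L+2), g (K + j) • wNS m (ψs m) w K c d γ (K + j)
        = ext (∑ j ∈ Finset.range (L+2), g (K+j) • qNS m w K (j+1)) (Tmap (ψs m) c)
          + ext (∑ j ∈ Finset.range (L+2), g (K+j) • qNS m w K j) (Tmap (ψs m) d) := by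
      rw [ext_sum, ext_sum, ← Finset.sum_add_distrib]
      refine Finset.sum_congr rfl fun j hj => ?_
      have harith : K + j - K = j := by omega
      rw [show wNS m (ψs m) w K c d γ (K + j)
          = ext (qNS m w K (j + 1)) (Tmap (ψs m) c) + ext (qNS m w K j) (Tmap (ψs m) d) by
        simp only [wNS]; rw [if_neg (by omega), harith]]
      rw [smul_add, ext_smul_left, ext_smul_left]
    rw [hblock1, hblock2] at hsum
    have hsum2 : ext ((∑ i ∈ Finset.range K, (g i * α) • w i)
          + ∑ j ∈ Finset.range (L+2), g (K+j) • qNS m w K (j+1)) (Tmap (ψs m) c)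
        + ext ((∑ i ∈ Finset.range K, (g i * β) • w i)
          + ∑ j ∈ Finset.range (L+2), g (K+j) • qNS m w K j) (Tmap (ψs m) d) = 0 := by
      rw [ext_add_left, ext_add_left, ← hsum]
      abel
    obtain ⟨hX0, hY0⟩ := ext_split hTcd hsum2
    have hYcombo : ∑ i ∈ Finset.range (m+2),
        (if i < K then g i * β else g (i+1)) • w i = 0 := by
      rw [← hY0]
      rw [show m + 2 = K + (L+1) by omega, sum_range_add']
      congr 1
      · exact Finset.sum_congr rfl fun i hi => by rw [if_pos (Finset.mem_range.mp hi)]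
      · rw [Finset.sum_range_succ' (fun j => g (K + j) • qNS m w K j) (L+1)]
        have hz : g (K + 0) • qNS m w K 0 = 0 := by rw [hq'0, smul_zero]
        rw [hz, add_zero]
        refine Finset.sum_congr rfl fun j hj => ?_
        rw [if_neg (by omega), hq'succ j]
        rfl
    have hYz := hind _ hYcombo
    have hgtail : ∀ j, 1 ≤ j → j ≤ L + 1 → g (K + j) = 0 := by
      intro j h1 h2
      have h3 := hYz (K + (j-1)) (by omega)
      rw [if_neg (by omega)] at h3
      have harr : K + (j-1) + 1 = K + j := by omega
      rwa [harr] at h3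
    have hXcombo : ∑ i ∈ Finset.range (m+2),
        (if i < K then g i * α else if i = K then g K else 0) • w i = 0 := by
      rw [← hX0]
      rw [show m + 2 = K + (L+1) by omega, sum_range_add']
      congr 1
      · exact Finset.sum_congr rfl fun i hi => by rw [if_pos (Finset.mem_range.mp hi)]
      · rw [Finset.sum_range_succ' (fun j => g (K + j) • qNS m w K (j+1)) (L+1)]
        have h1 : ∑ j ∈ Finset.range (L+1), g (K + (j+1)) • qNS m w K ((j+1)+1) = 0 := by
          refine Finset.sum_eq_zero fun j hj => ?_
          have hjr := Finset.mem_range.mp hj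
          rw [hgtail (j+1) (by omega) (by omega), zero_smul]
        rw [h1, zero_add, hq'succ 0]
        rw [Finset.sum_range_succ'
          (fun j => (if K + j < K then g (K+j) * α else if K + j = K then g K else 0) • w (K + j)) L]
        have h2 : ∑ j ∈ Finset.range L,
            (if K + (j+1) < K then g (K+(j+1)) * α else if K + (j+1) = K then g K else 0)
              • w (K + (j+1)) = 0 := by
          refine Finset.sum_eq_zero fun j hj => ?_
          have hjr := Finset.mem_range.mp hj
          rw [if_neg (by omega), if_neg (by omega), zero_smul]
        rw [h2, zero_add, if_neg (by omega), if_pos (by omega)]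
        rfl
    have hXz := hind _ hXcombo
    by_cases hi0K : i0 < K
    · have h1 := hXz i0 (by omega)
      rw [if_pos hi0K] at h1
      have h2 := hYz i0 (by omega)
      rw [if_pos hi0K] at h2
      rcases mul_eq_zero.mp h1 with hg | ha
      · exact hg
      · rcases mul_eq_zero.mp h2 with hg | hb
        · exact hg
        · exfalso
          apply hγ
          rw [hγab, ha, hb]
          simp
    · by_cases hi0Keq : i0 = K
      · subst hi0Keq
        have h1 := hXz i0 (by omega)
        rw [if_neg (by omega), if_pos rfl] at h1
        exact h1
      · have h1 : 1 ≤ i0 - K := by omega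
        have h2 : i0 - K ≤ L + 1 := by omega
        have h3 := hgtail (i0 - K) h1 h2
        rwa [show K + (i0 - K) = i0 by omega] at h3

lemma inv_step (ψs : ℕ → Fin 2 × Fin 2 → ℂ) (m : ℕ) (h : Inv ψs m) : Inv ψs (m+1) := by
  by_cases hdet : detM (ψs m) = 0
  · exact inv_step_sing ψs m hdet h
  · exact inv_step_ns ψs m hdet h

lemma inv_all (ψs : ℕ → Fin 2 × Fin 2 → ℂ) : ∀ m, Inv ψs m := by
  intro m
  induction m with
  | zero => exact inv_zero ψs
  | succ m ih => exact inv_step ψs m ih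


/-! ### quadratic form nonnegativity -/

lemma sum_mulVec_apply {ι A : Type*} [Fintype ι] [Fintype A] [DecidableEq A]
    (M : ι → Matrix A A ℂ) (v : A → ℂ) (x : A) :
    (∑ i : ι, M i).mulVec v x = ∑ i : ι, (M i).mulVec v x := by
  unfold Matrix.mulVec dotProduct
  calc ∑ y : A, (∑ i : ι, M i) x y * v y
      = ∑ y : A, ∑ i : ι, M i x y * v y := by
        refine Finset.sum_congr rfl fun y _ => ?_
        rw [Matrix.sum_apply, Finset.sum_mul]
    _ = ∑ i : ι, ∑ y : A, M i x y * v y := Finset.sum_comm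

lemma ctrv_U2 {N : ℕ} (ψ : Fin 2 × Fin 2 → ℂ) {i j : Fin N} (hij : i ≠ j) (v : V N)
    (x : Fin N → Fin 2) (a b : Fin 2) :
    ctrv ψ i j v (U2 x i j a b) = ctrv ψ i j v x := by
  unfold ctrv
  refine Finset.sum_congr rfl fun a' _ => Finset.sum_congr rfl fun b' _ => ?_
  rw [U2_U2 _ hij]

lemma quad_term {N : ℕ} (ψ : Fin 2 × Fin 2 → ℂ) {i j : Fin N} (hij : i ≠ j) (v : V N) :
    ∑ x : Fin N → Fin 2, star (v x) * ((twoSite N (vecProj ψ) i j).mulVec v x)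
      = (1/4 : ℂ) * ∑ x : Fin N → Fin 2, (Complex.normSq (ctrv ψ i j v x) : ℂ) := by
  classical
  set g : (Fin N → Fin 2) → ℂ := fun x => ctrv ψ i j v x with hg
  have hstarg : ∀ x, star (g x) = ∑ a : Fin 2, ∑ b : Fin 2, ψ (a, b) * star (v (U2 x i j a b)) := by
    intro x
    rw [hg]
    unfold ctrv
    rw [star_sum]
    refine Finset.sum_congr rfl fun a _ => ?_
    rw [star_sum]
    refine Finset.sum_congr rfl fun b _ => ?_
    rw [star_mul', star_star]
  -- the involution
  set F : ((Fin N → Fin 2) × (Fin 2 × Fin 2)) → ((Fin N → Fin 2) × (Fin 2 × Fin 2)) :=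
    fun p => (U2 p.1 i j p.2.1 p.2.2, (p.1 i, p.1 j)) with hF
  have hinv : Function.Involutive F := by
    intro p
    rw [hF]
    simp only
    refine Prod.ext ?_ ?_
    · show U2 (U2 p.1 i j p.2.1 p.2.2) i j (p.1 i) (p.1 j) = p.1
      rw [U2_U2 _ hij, U2_self _ hij]
    · show ((U2 p.1 i j p.2.1 p.2.2) i, (U2 p.1 i j p.2.1 p.2.2) j) = p.2
      rw [U2_apply_i _ hij, U2_apply_j]
  set H : ((Fin N → Fin 2) × (Fin 2 × Fin 2)) → ℂ :=
    fun p => ψ (p.1 i, p.1 j) * star (v p.1) * g p.1 with hH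
  have hkey : ∑ x : Fin N → Fin 2, star (g x) * g x
      = 4 * ∑ x : Fin N → Fin 2, ψ (x i, x j) * star (v x) * g x := by
    calc ∑ x : Fin N → Fin 2, star (g x) * g x
        = ∑ x : Fin N → Fin 2, ∑ p : Fin 2 × Fin 2, ψ p * star (v (U2 x i j p.1 p.2)) * g x := by
          refine Finset.sum_congr rfl fun x _ => ?_
          rw [hstarg x, Fintype.sum_prod_type, Finset.sum_mul]
          refine Finset.sum_congr rfl fun a _ => ?_
          rw [Finset.sum_mul]
      _ = ∑ p' : (Fin N → Fin 2) × (Fin 2 × Fin 2), H (F p') := by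
          rw [Fintype.sum_prod_type]
          refine Finset.sum_congr rfl fun x _ => Finset.sum_congr rfl fun p _ => ?_
          rw [hH, hF]
          simp only
          rw [U2_apply_i _ hij, U2_apply_j]
          have hclass : g (U2 x i j p.1 p.2) = g x := by
            rw [hg]
            exact ctrv_U2 ψ hij v x p.1 p.2
          rw [hclass]
      _ = ∑ p' : (Fin N → Fin 2) × (Fin 2 × Fin 2), H p' := Equiv.sum_comp hinv.toPerm H
      _ = 4 * ∑ x : Fin N → Fin 2, ψ (x i, x j) * star (v x) * g x := by
          rw [Fintype.sum_prod_type]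
          rw [Finset.mul_sum]
          refine Finset.sum_congr rfl fun x _ => ?_
          rw [hH]
          simp only
          rw [Finset.sum_const]
          have h4 : (Finset.univ : Finset (Fin 2 × Fin 2)).card = 4 := by decide
          rw [h4]
          simp [nsmul_eq_mul]
  have hterm : ∀ x, star (v x) * ((twoSite N (vecProj ψ) i j).mulVec v x)
      = ψ (x i, x j) * star (v x) * g x := by
    intro x
    rw [twoSite_mulVec ψ hij v x]
    ring
  rw [Finset.sum_congr rfl (fun x _ => hterm x)]
  have hns : ∀ x, (Complex.normSq (g x) : ℂ) = star (g x) * g x := by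
    intro x
    rw [Complex.normSq_eq_conj_mul_self]
    rfl
  rw [Finset.sum_congr rfl (fun x _ => hns x)]
  rw [hkey]
  ring


lemma exists_eigen {N : ℕ} (ψs : ℕ → Fin 2 × Fin 2 → ℂ) {z : ℂ}
    (hz : z ∈ spectrum ℂ (HnGen N ψs)) :
    ∃ v : V N, v ≠ 0 ∧ (HnGen N ψs).mulVec v = z • v := by
  rw [spectrum.mem_iff, Matrix.isUnit_iff_isUnit_det] at hz
  have hdet : ((algebraMap ℂ (Matrix (Fin N → Fin 2) (Fin N → Fin 2) ℂ)) z - HnGen N ψs).det = 0 := by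
    by_contra hne
    exact hz (isUnit_iff_ne_zero.mpr hne)
  obtain ⟨v, hv0, hv⟩ := Matrix.exists_mulVec_eq_zero_iff.mpr hdet
  refine ⟨v, hv0, ?_⟩
  have halg : (algebraMap ℂ (Matrix (Fin N → Fin 2) (Fin N → Fin 2) ℂ)) z
      = z • (1 : Matrix (Fin N → Fin 2) (Fin N → Fin 2) ℂ) :=
    Algebra.algebraMap_eq_smul_one z
  rw [halg, Matrix.sub_mulVec, Matrix.smul_mulVec, Matrix.one_mulVec] at hv
  exact (sub_eq_zero.mp hv).symm

end FFaux


open FFaux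

/-- **Frustration freeness.** For any normalized two-qubit states `ψ₁, …, ψ_{n−1}`, the
Hamiltonian `H_n(ψ₁,…,ψ_{n−1})` has smallest eigenvalue zero and its kernel has dimension
at least `n+1`. -/
theorem frustration_free (n : ℕ) (hn : 2 ≤ n)
    (ψs : ℕ → Fin 2 × Fin 2 → ℂ)
    (hnorm : ∀ j : ℕ, j + 1 < n → ∑ a, Complex.normSq (ψs j a) = 1) :
    (0 : ℂ) ∈ spectrum ℂ (HnGen n ψs) ∧
    (∀ z ∈ spectrum ℂ (HnGen n ψs), 0 ≤ z.re ∧ z.im = 0) ∧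
    n + 1 ≤ Module.finrank ℂ (LinearMap.ker (HnGen n ψs).mulVecLin) := by
  classical
  obtain ⟨m, rfl⟩ : ∃ m, n = m + 1 := ⟨n - 1, by omega⟩
  obtain ⟨K, w, q, c, d, γ, hK, hcd, hγ, hq0, hqhi, hqFK, hwFK, hlast, hform, hind⟩ :=
    inv_all ψs m
  have hker : ∀ i, (HnGen (m+1) ψs).mulVec (w i) = 0 :=
    fun i => HnGen_mulVec_eq_zero ψs (w i) (hwFK i)
  have hw0ne : w 0 ≠ 0 := by
    intro hc
    have hs : ∑ j ∈ Finset.range (m+2), (fun j => if j = 0 then (1:ℂ) else 0) j • w j = 0 := by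
      rw [Finset.sum_range_succ' (fun j => (if j = 0 then (1:ℂ) else 0) • w j) (m+1)]
      have h1 : ∑ j ∈ Finset.range (m+1), (if j + 1 = 0 then (1:ℂ) else 0) • w (j+1) = 0 :=
        Finset.sum_eq_zero fun j _ => by rw [if_neg (by omega), zero_smul]
      rw [h1, zero_add, if_pos rfl, one_smul, hc]
    have h2 := hind _ hs 0 (by omega)
    simp at h2
  refine ⟨?_, ?_, ?_⟩
  · -- 0 ∈ spectrum
    rw [spectrum.mem_iff]
    intro hunit
    rw [Matrix.isUnit_iff_isUnit_det] at hunit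
    have hdet : ((algebraMap ℂ (Matrix (Fin (m+1) → Fin 2) (Fin (m+1) → Fin 2) ℂ)) (0:ℂ)
        - HnGen (m+1) ψs).det = 0 := by
      apply Matrix.exists_mulVec_eq_zero_iff.mp
      refine ⟨w 0, hw0ne, ?_⟩
      rw [map_zero, Matrix.sub_mulVec, Matrix.zero_mulVec, hker 0, sub_self]
    rw [hdet] at hunit
    simpa using hunit
  · -- real nonnegative spectrum
    intro z hz
    obtain ⟨v, hv0, hv⟩ := exists_eigen ψs hz
    have hWpos : 0 < ∑ x : Fin (m+1) → Fin 2, Complex.normSq (v x) := by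
      obtain ⟨x0, hx0⟩ : ∃ x, v x ≠ 0 := by
        by_contra hcc
        push_neg at hcc
        exact hv0 (funext fun x => hcc x)
      refine Finset.sum_pos' (fun x _ => Complex.normSq_nonneg _)
        ⟨x0, Finset.mem_univ _, Complex.normSq_pos.mpr hx0⟩
    set W : ℝ := ∑ x : Fin (m+1) → Fin 2, Complex.normSq (v x) with hW
    set σ : ℝ := ∑ i : Fin (m+1), (if h : (i:ℕ)+1 < m+1 then
        (1/4) * ∑ x : Fin (m+1) → Fin 2, Complex.normSq (ctrv (ψs (i:ℕ)) i ⟨(i:ℕ)+1, h⟩ v x)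
      else 0) with hσ
    have hσnn : 0 ≤ σ := by
      rw [hσ]
      refine Finset.sum_nonneg fun i _ => ?_
      by_cases h : (i:ℕ)+1 < m+1
      · rw [dif_pos h]
        exact mul_nonneg (by norm_num) (Finset.sum_nonneg fun x _ => Complex.normSq_nonneg _)
      · rw [dif_neg h]
    have hterm : ∀ i : Fin (m+1),
        (∑ x : Fin (m+1) → Fin 2, star (v x) *
          (((if h : (i:ℕ)+1 < m+1 then twoSite (m+1) (vecProj (ψs (i:ℕ))) i ⟨(i:ℕ)+1, h⟩
            else 0) : Matrix (Fin (m+1) → Fin 2) (Fin (m+1) → Fin 2) ℂ).mulVec v x))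
        = (((if h : (i:ℕ)+1 < m+1 then
            (1/4) * ∑ x : Fin (m+1) → Fin 2, Complex.normSq (ctrv (ψs (i:ℕ)) i ⟨(i:ℕ)+1, h⟩ v x)
          else 0 : ℝ)) : ℂ) := by
      intro i
      by_cases h : (i:ℕ)+1 < m+1
      · rw [dif_pos h, dif_pos h,
          quad_term (ψs (i:ℕ)) (show i ≠ ⟨(i:ℕ)+1, h⟩ by simp [Fin.ext_iff]) v]
        push_cast
        ring
      · rw [dif_neg h, dif_neg h]
        simp [Matrix.zero_mulVec]
    have hQ : ∑ x : Fin (m+1) → Fin 2, star (v x) * ((HnGen (m+1) ψs).mulVec v x) = (σ : ℂ) := by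
      calc ∑ x : Fin (m+1) → Fin 2, star (v x) * ((HnGen (m+1) ψs).mulVec v x)
          = ∑ x : Fin (m+1) → Fin 2, ∑ i : Fin (m+1), star (v x) *
              (((if h : (i:ℕ)+1 < m+1 then twoSite (m+1) (vecProj (ψs (i:ℕ))) i ⟨(i:ℕ)+1, h⟩
                else 0) : Matrix (Fin (m+1) → Fin 2) (Fin (m+1) → Fin 2) ℂ).mulVec v x) := by
            refine Finset.sum_congr rfl fun x _ => ?_
            unfold HnGen
            rw [sum_mulVec_apply, Finset.mul_sum]
        _ = ∑ i : Fin (m+1), ∑ x : Fin (m+1) → Fin 2, star (v x) *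
              (((if h : (i:ℕ)+1 < m+1 then twoSite (m+1) (vecProj (ψs (i:ℕ))) i ⟨(i:ℕ)+1, h⟩
                else 0) : Matrix (Fin (m+1) → Fin 2) (Fin (m+1) → Fin 2) ℂ).mulVec v x) :=
            Finset.sum_comm
        _ = ∑ i : Fin (m+1), (((if h : (i:ℕ)+1 < m+1 then
              (1/4) * ∑ x : Fin (m+1) → Fin 2, Complex.normSq (ctrv (ψs (i:ℕ)) i ⟨(i:ℕ)+1, h⟩ v x)
            else 0 : ℝ)) : ℂ) :=
            Finset.sum_congr rfl fun i _ => hterm i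
        _ = (σ : ℂ) := by
            rw [hσ]
            push_cast
            rfl
    have hQ2 : ∑ x : Fin (m+1) → Fin 2, star (v x) * ((HnGen (m+1) ψs).mulVec v x)
        = z * (W : ℂ) := by
      calc ∑ x : Fin (m+1) → Fin 2, star (v x) * ((HnGen (m+1) ψs).mulVec v x)
          = ∑ x : Fin (m+1) → Fin 2, z * (star (v x) * v x) := by
            rw [hv]
            refine Finset.sum_congr rfl fun x _ => ?_
            rw [Pi.smul_apply, smul_eq_mul]
            ring
        _ = z * ∑ x : Fin (m+1) → Fin 2, star (v x) * v x := by rw [Finset.mul_sum]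
        _ = z * (W : ℂ) := by
            rw [hW]
            congr 1
            push_cast
            refine Finset.sum_congr rfl fun x _ => ?_
            rw [Complex.normSq_eq_conj_mul_self]
            rfl
    have hWne : (W : ℂ) ≠ 0 := by
      exact_mod_cast hWpos.ne'
    have hzeq : z = ((σ / W : ℝ) : ℂ) := by
      rw [Complex.ofReal_div, eq_div_iff hWne, ← hQ2, hQ]
    constructor
    · rw [hzeq, Complex.ofReal_re]
      exact div_nonneg hσnn hWpos.le
    · rw [hzeq]
      exact Complex.ofReal_im _
  · -- dimension of the kernel
    have hmem : ∀ i, w i ∈ LinearMap.ker (HnGen (m+1) ψs).mulVecLin := by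
      intro i
      rw [LinearMap.mem_ker, Matrix.mulVecLin_apply, hker i]
    have hli : LinearIndependent ℂ
        (fun i : Fin (m+2) => (⟨w i, hmem i⟩ : LinearMap.ker (HnGen (m+1) ψs).mulVecLin)) := by
      rw [Fintype.linearIndependent_iff]
      intro gg hgg i
      have hval : ∑ i : Fin (m+2), gg i • w i = 0 := by
        have h2 := congrArg (Subtype.val) hgg
        simpa using h2
      have hrange : ∑ j ∈ Finset.range (m+2),
          (fun j => if h : j < m+2 then gg ⟨j, h⟩ else 0) j • w j = 0 := by
        rw [← Fin.sum_univ_eq_sum_range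
          (fun j => (if h : j < m+2 then gg ⟨j, h⟩ else 0) • w j) (m+2), ← hval]
        refine Finset.sum_congr rfl fun i' _ => ?_
        rw [dif_pos i'.isLt]
      have h3 := hind _ hrange i i.isLt
      rw [dif_pos i.isLt] at h3
      simpa using h3
    have hcard := hli.fintype_card_le_finrank
    simp only [Fintype.card_fin] at hcard
    omega
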